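/- Let k ≥ 1 and let L : ℤ^{2k} × ℤ^{2k} → ℤ be a ℤ-bilinear form such that L(e_i, e_i) is even for every i, and L(e_i, e_j) ≡ L(e_j, e_i) (mod 2) for all i ≠ j. Let G_L be the group with underlying set ℤ × ℤ^{2k} and multiplication (j₁, a)·(j₂, b) = (j₁ + j₂ + L(a,b), a + b). Then for every function c : {1,…,2k} → ℤ/2ℤ, the map F : G_L → ℤ/2ℤ defined by F(j, h) = j + Σ_{i=1}^{2k} c_i h_i + Σ_{1 ≤ i < i' ≤ 2k} h_i h_{i'} L(e_i, e_{i'}) (mod 2) is a group homomorphism. -/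
import Mathlib


/-- The multiplication of the group `G_L` on underlying set `ℤ × ℤ^{2k}`:
`(j₁, a)·(j₂, b) = (j₁ + j₂ + L(a,b), a + b)`. -/
def GLmul {k : ℕ} (L : (Fin (2 * k) → ℤ) →ₗ[ℤ] (Fin (2 * k) → ℤ) →ₗ[ℤ] ℤ)
    (p q : ℤ × (Fin (2 * k) → ℤ)) : ℤ × (Fin (2 * k) → ℤ) :=
  (p.1 + q.1 + L p.2 q.2, p.2 + q.2)

/-- The map `F(j, h) = j + Σᵢ cᵢ hᵢ + Σ_{i < i'} hᵢ hᵢ' L(eᵢ, eᵢ')  (mod 2)`. -/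
def Fmap {k : ℕ} (L : (Fin (2 * k) → ℤ) →ₗ[ℤ] (Fin (2 * k) → ℤ) →ₗ[ℤ] ℤ)
    (c : Fin (2 * k) → ZMod 2) (p : ℤ × (Fin (2 * k) → ℤ)) : ZMod 2 :=
  (p.1 : ZMod 2) + ∑ i : Fin (2 * k), c i * (p.2 i : ZMod 2) +
    ((∑ q ∈ Finset.univ.filter (fun q : Fin (2 * k) × Fin (2 * k) => q.1 < q.2),
        p.2 q.1 * p.2 q.2 * L (Pi.single q.1 1) (Pi.single q.2 1) : ℤ) : ZMod 2)

lemma L_expand {n : ℕ} (L : (Fin n → ℤ) →ₗ[ℤ] (Fin n → ℤ) →ₗ[ℤ] ℤ)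
    (a b : Fin n → ℤ) :
    L a b = ∑ i, ∑ j, a i * b j * L (Pi.single i 1) (Pi.single j 1) := by
  have ha : a = ∑ i, a i • Pi.single i (1 : ℤ) := by
    ext j; simp [Pi.single_apply]
  have hb : b = ∑ j, b j • Pi.single j (1 : ℤ) := by
    ext j; simp [Pi.single_apply]
  conv_lhs => rw [ha, hb]
  simp only [map_sum, LinearMap.sum_apply, map_smul, LinearMap.smul_apply,
    smul_eq_mul, Finset.mul_sum]
  rw [Finset.sum_comm]
  refine Finset.sum_congr rfl fun i _ => Finset.sum_congr rfl fun j _ => by ring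

lemma castL {n : ℕ} (L : (Fin n → ℤ) →ₗ[ℤ] (Fin n → ℤ) →ₗ[ℤ] ℤ)
    (hdiag : ∀ i : Fin n, Even (L (Pi.single i 1) (Pi.single i 1)))
    (hsym : ∀ i j : Fin n, i ≠ j →
      ((L (Pi.single i 1) (Pi.single j 1) : ℤ) : ZMod 2)
        = ((L (Pi.single j 1) (Pi.single i 1) : ℤ) : ZMod 2))
    (a b : Fin n → ℤ) :
    ((L a b : ℤ) : ZMod 2)
      = ∑ q ∈ Finset.univ.filter (fun q : Fin n × Fin n => q.1 < q.2),
          (a q.1 : ZMod 2) * (b q.2 : ZMod 2)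
            * ((L (Pi.single q.1 1) (Pi.single q.2 1) : ℤ) : ZMod 2)
        + ∑ q ∈ Finset.univ.filter (fun q : Fin n × Fin n => q.1 < q.2),
          (b q.1 : ZMod 2) * (a q.2 : ZMod 2)
            * ((L (Pi.single q.1 1) (Pi.single q.2 1) : ℤ) : ZMod 2) := by
  rw [L_expand L a b]
  push_cast
  rw [← Finset.sum_product']
  have hsplit := Finset.sum_filter_add_sum_filter_not
    (Finset.univ : Finset (Fin n × Fin n)) (fun q => q.1 < q.2)
    (fun q => (a q.1 : ZMod 2) * (b q.2 : ZMod 2)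
      * ((L (Pi.single q.1 1) (Pi.single q.2 1) : ℤ) : ZMod 2))
  rw [Finset.univ_product_univ] at *
  rw [← hsplit]
  congr 1
  have h2 : ∀ q : Fin n × Fin n, ¬ q.1 < q.2 ↔ (q.2 < q.1 ∨ q.1 = q.2) := by
    intro q
    constructor
    · intro h; rcases lt_or_eq_of_le (not_lt.mp h) with h' | h'
      · exact Or.inl h'
      · exact Or.inr h'.symm
    · rintro (h | h)
      · exact not_lt.mpr h.le
      · exact h ▸ lt_irrefl _
  rw [Finset.filter_congr (fun q _ => h2 q), Finset.filter_or, Finset.sum_union]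
  · have hzero : ∑ q ∈ Finset.univ.filter (fun q : Fin n × Fin n => q.1 = q.2),
        (a q.1 : ZMod 2) * (b q.2 : ZMod 2)
          * ((L (Pi.single q.1 1) (Pi.single q.2 1) : ℤ) : ZMod 2) = 0 := by
      apply Finset.sum_eq_zero
      intro q hq
      rw [Finset.mem_filter] at hq
      have : ((L (Pi.single q.1 1) (Pi.single q.2 1) : ℤ) : ZMod 2) = 0 := by
        rw [← hq.2, ZMod.intCast_zmod_eq_zero_iff_dvd]
        exact_mod_cast (hdiag q.1).two_dvd
      rw [this, mul_zero]
    rw [hzero, add_zero]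
    refine Finset.sum_nbij' (fun q => Prod.swap q) (fun q => Prod.swap q) ?_ ?_ ?_ ?_ ?_
    · intro q hq; simp at hq ⊢; exact hq
    · intro q hq; simp at hq ⊢; exact hq
    · intro q _; simp
    · intro q _; simp
    · intro q hq
      rw [Finset.mem_filter] at hq
      simp only [Prod.fst_swap, Prod.snd_swap]
      rw [hsym q.1 q.2 (ne_of_gt hq.2)]
      ring
  · rw [Finset.disjoint_filter]
    intro q _ h h'
    exact absurd h' (ne_of_gt h)

/-- If `L` is a ℤ-bilinear form on `ℤ^{2k}` with `L(eᵢ,eᵢ)` even and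
`L(eᵢ,eⱼ) ≡ L(eⱼ,eᵢ) (mod 2)` for `i ≠ j`, then for any `c : {1,…,2k} → ℤ/2`, the map
`F(j,h) = j + Σ cᵢ hᵢ + Σ_{i<i'} hᵢ hᵢ' L(eᵢ,eᵢ') (mod 2)` is a group homomorphism from
`G_L` to `ℤ/2`. -/
theorem fmap_isGroupHom (k : ℕ) (hk : 1 ≤ k)
    (L : (Fin (2 * k) → ℤ) →ₗ[ℤ] (Fin (2 * k) → ℤ) →ₗ[ℤ] ℤ)
    (hdiag : ∀ i : Fin (2 * k), Even (L (Pi.single i 1) (Pi.single i 1)))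
    (hsym : ∀ i j : Fin (2 * k), i ≠ j →
      ((L (Pi.single i 1) (Pi.single j 1) : ℤ) : ZMod 2)
        = ((L (Pi.single j 1) (Pi.single i 1) : ℤ) : ZMod 2))
    (c : Fin (2 * k) → ZMod 2) :
    ∀ p q : ℤ × (Fin (2 * k) → ℤ),
      Fmap L c (GLmul L p q) = Fmap L c p + Fmap L c q := by
  rintro ⟨j₁, a⟩ ⟨j₂, b⟩
  simp only [Fmap, GLmul, Pi.add_apply]
  push_cast
  rw [castL L hdiag hsym a b]
  have hexp : ∀ q : Fin (2 * k) × Fin (2 * k),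
      ((a q.1 : ZMod 2) + b q.1) * ((a q.2 : ZMod 2) + b q.2)
          * ((L (Pi.single q.1 1) (Pi.single q.2 1) : ℤ) : ZMod 2)
      = (a q.1 : ZMod 2) * (a q.2 : ZMod 2)
          * ((L (Pi.single q.1 1) (Pi.single q.2 1) : ℤ) : ZMod 2)
        + (b q.1 : ZMod 2) * (b q.2 : ZMod 2)
          * ((L (Pi.single q.1 1) (Pi.single q.2 1) : ℤ) : ZMod 2)
        + ((a q.1 : ZMod 2) * (b q.2 : ZMod 2)
            * ((L (Pi.single q.1 1) (Pi.single q.2 1) : ℤ) : ZMod 2)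
          + (b q.1 : ZMod 2) * (a q.2 : ZMod 2)
            * ((L (Pi.single q.1 1) (Pi.single q.2 1) : ℤ) : ZMod 2)) := by
    intro q; ring
  rw [Finset.sum_congr rfl (fun q _ => hexp q), Finset.sum_add_distrib,
    Finset.sum_add_distrib]
  simp only [mul_add]
  rw [Finset.sum_add_distrib, Finset.sum_add_distrib]
  have h2 : (2 : ZMod 2) = 0 := rfl
  linear_combination (∑ q ∈ Finset.univ.filter
        (fun q : Fin (2 * k) × Fin (2 * k) => q.1 < q.2),
      (a q.1 : ZMod 2) * (b q.2 : ZMod 2)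
        * ((L (Pi.single q.1 1) (Pi.single q.2 1) : ℤ) : ZMod 2)
    + ∑ q ∈ Finset.univ.filter
        (fun q : Fin (2 * k) × Fin (2 * k) => q.1 < q.2),
      (b q.1 : ZMod 2) * (a q.2 : ZMod 2)
        * ((L (Pi.single q.1 1) (Pi.single q.2 1) : ℤ) : ZMod 2)) * h2
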